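/- arXiv:1101.3381 — 3 statements merged into one kernel-verified Lean document; each statement's English description precedes it below -/
import Mathlib

section
/- Let I be a ternary independence relation on a finite set V satisfying Intersection, Decomposition, and Strong Union, and let B(X) ⊆ V \ {X} be a Markov boundary of X, i.e., a minimal set such that for all W ∉ B(X) ∪ {X}, I(X;W|B(X)\{W}). Then for every W ≠ X in V, I(X;W|B(X)\{X,W}) implies W ∉ B(X). -/
/-- Boundary converse lemma: if `B` is a Markov boundary of `X` (blanket property plus
minimality), then independence of `X` and `W` given `B \ {X,W}` implies `W ∉ B`. -/
theorem markov_boundary_converse {V : Type*} [DecidableEq V] [Fintype V]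
    (I : V → V → Finset V → Prop) (Ipair : V → V → V → Finset V → Prop)
    (intersection : ∀ X Y W (Z : Finset V),
      I X Y (insert W Z) → I X W (insert Y Z) → Ipair X Y W Z)
    (decomposition : ∀ X Y W (Z : Finset V), Ipair X Y W Z → I X Y Z ∧ I X W Z)
    (strongUnion : ∀ X Y W (Z : Finset V), I X Y Z → I X Y (insert W Z))
    (X : V) (B : Finset V) (hXB : X ∉ B)
    (hblanket : ∀ W, W ≠ X → W ∉ B → I X W (B \ {W}))
    (hmin : ∀ W ∈ B, ∃ Y, Y ∉ B ∧ Y ≠ X ∧ ¬ I X Y ((B \ {W}) \ {Y})) :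
    ∀ W, W ≠ X → I X W (B \ {X, W}) → W ∉ B := by
  intro W hWX hI hWB
  -- B \ {X, W} = B \ {W} since X ∉ B
  have hBX : B \ {X, W} = B \ {W} := by
    ext a
    simp only [Finset.mem_sdiff, Finset.mem_insert, Finset.mem_singleton]
    constructor
    · rintro ⟨ha, h⟩; exact ⟨ha, fun h' => h (Or.inr h')⟩
    · rintro ⟨ha, h⟩
      refine ⟨ha, ?_⟩
      rintro (rfl | rfl)
      · exact hXB ha
      · exact h rfl
  rw [hBX] at hI
  obtain ⟨Y, hYB, hYX, hY⟩ := hmin W hWB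
  have hYW : (B \ {W}) \ {Y} = B \ {W} :=
    Finset.sdiff_eq_self_iff_disjoint.mpr (Finset.disjoint_singleton_right.mpr (by simp [hYB]))
  rw [hYW] at hY
  -- blanket gives I X Y (B \ {Y}) = I X Y B
  have hBY : B \ {Y} = B :=
    Finset.sdiff_eq_self_iff_disjoint.mpr (Finset.disjoint_singleton_right.mpr hYB)
  have h1 : I X Y B := by have := hblanket Y hYX hYB; rwa [hBY] at this
  have hins : insert W (B \ {W}) = B := by
    rw [Finset.sdiff_singleton_eq_erase, Finset.insert_erase hWB]
  have h1' : I X Y (insert W (B \ {W})) := by rwa [hins]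
  have h2 : I X W (insert Y (B \ {W})) := strongUnion X W Y _ hI
  exact hY ((decomposition X Y W (B \ {W}) (intersection X Y W (B \ {W}) h1' h2)).1)
end

section
/- Let I be a ternary independence relation on a finite set V satisfying Intersection, Decomposition, and Strong Union, and let B(X) be a Markov boundary of X for each X ∈ V. Then for all distinct X, W: W ∈ B(X) if and only if ¬I(X;W|B(X)\{X,W}). -/
/-- Membership in the Markov boundary is characterized by dependence given the rest of
the boundary: `W ∈ B(X) ⟺ ¬I(X;W|B(X)\{X,W})`. -/
theorem boundary_membership_iff_dependence {V : Type*} [DecidableEq V] [Fintype V]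
    (I : V → V → Finset V → Prop) (Ipair : V → V → V → Finset V → Prop)
    (intersection : ∀ X Y W (Z : Finset V),
      I X Y (insert W Z) → I X W (insert Y Z) → Ipair X Y W Z)
    (decomposition : ∀ X Y W (Z : Finset V), Ipair X Y W Z → I X Y Z ∧ I X W Z)
    (strongUnion : ∀ X Y W (Z : Finset V), I X Y Z → I X Y (insert W Z))
    (B : V → Finset V) (hXB : ∀ X, X ∉ B X)
    (hblanket : ∀ X W, W ≠ X → W ∉ B X → I X W (B X \ {W}))
    (hmin : ∀ X, ∀ B' ⊂ B X, ¬ (∀ W, W ≠ X → W ∉ B' → I X W (B' \ {W}))) :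
    ∀ X W, X ≠ W → (W ∈ B X ↔ ¬ I X W (B X \ {X, W})) := by
  intro X W hXW
  have hdiff : B X \ {X, W} = B X \ {W} := by
    ext a
    simp only [Finset.mem_sdiff, Finset.mem_insert, Finset.mem_singleton]
    constructor
    · rintro ⟨ha, h⟩; exact ⟨ha, fun h' => h (Or.inr h')⟩
    · rintro ⟨ha, h⟩
      refine ⟨ha, ?_⟩
      rintro (rfl | rfl)
      · exact hXB _ ha
      · exact h rfl
  rw [hdiff]
  constructor
  · intro hW hI
    set B' := B X \ {W} with hB'
    have hsub : B' ⊂ B X := by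
      apply Finset.sdiff_ssubset
      · simp [hW]
      · simp
    have := hmin X B' hsub
    apply this
    intro Y hYX hYB'
    by_cases hYW : Y = W
    · subst hYW
      have : B' \ {Y} = B' := by
        apply Finset.sdiff_eq_self_of_disjoint
        simp [hB']
      rw [this]; exact hI
    · have hYnB : Y ∉ B X := by
        intro h
        exact hYB' (by simp [hB', Finset.mem_sdiff, h, hYW])
      have h1 : I X Y (B X \ {Y}) := hblanket X Y hYX hYnB
      have heq : B X \ {Y} = insert W (B' \ {Y}) := by
        ext a
        simp only [hB', Finset.mem_sdiff, Finset.mem_insert, Finset.mem_singleton]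
        constructor
        · rintro ⟨ha, hne⟩
          by_cases haW : a = W
          · exact Or.inl haW
          · exact Or.inr ⟨⟨ha, haW⟩, hne⟩
        · rintro (rfl | ⟨⟨ha, _⟩, hne⟩)
          · exact ⟨hW, Ne.symm hYW⟩
          · exact ⟨ha, hne⟩
      rw [heq] at h1
      have hB'Y : B' \ {Y} = B' := by
        apply Finset.sdiff_eq_self_of_disjoint
        simp [hYB']
      have h2 : I X W (insert Y (B' \ {Y})) := by
        rw [hB'Y]
        have : B' \ {W} = B' := by
          apply Finset.sdiff_eq_self_of_disjoint
          simp [hB']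
        exact strongUnion X W Y B' (by rw [← this] at hI ⊢; exact hI)
      exact (decomposition X Y W (B' \ {Y}) (intersection X Y W (B' \ {Y}) h1 h2)).1
  · intro h
    by_contra hW
    exact h (hblanket X W (Ne.symm hXW) hW)
end

section
/- Let I be a ternary independence relation satisfying Intersection, Decomposition, and Strong Union, and suppose I is symmetric in its first two arguments (I(X;Y|Z) ⟺ I(Y;X|Z)). If B(X) is a Markov boundary of X for every X ∈ V and the graph G is defined by connecting X to all members of B(X), then the edge relation of G is symmetric: Y ∈ B(X) implies X ∈ B(Y). -/
/-- Symmetry of the boundary-based graph: if the independence relation is symmetric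
(and satisfies Intersection, Decomposition, Strong Union), then the edge relation
built from Markov boundaries is symmetric: `Y ∈ B(X) → X ∈ B(Y)`. -/
theorem boundary_graph_symmetric {V : Type*} [DecidableEq V] [Fintype V]
    (I : V → V → Finset V → Prop) (Ipair : V → V → V → Finset V → Prop)
    (intersection : ∀ X Y W (Z : Finset V),
      I X Y (insert W Z) → I X W (insert Y Z) → Ipair X Y W Z)
    (decomposition : ∀ X Y W (Z : Finset V), Ipair X Y W Z → I X Y Z ∧ I X W Z)
    (strongUnion : ∀ X Y W (Z : Finset V), I X Y Z → I X Y (insert W Z))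
    (symm : ∀ X Y (Z : Finset V), I X Y Z ↔ I Y X Z)
    (B : V → Finset V) (hXB : ∀ X, X ∉ B X)
    (hblanket : ∀ X W, W ≠ X → W ∉ B X → I X W (B X \ {W}))
    (hmin : ∀ X, ∀ B' ⊂ B X, ¬ (∀ W, W ≠ X → W ∉ B' → I X W (B' \ {W}))) :
    ∀ X Y, Y ∈ B X → X ∈ B Y := by
  -- Strong union extended to arbitrary supersets
  have su : ∀ (A C : V) (Z Z' : Finset V), Z ⊆ Z' → I A C Z → I A C Z' := by
    intro A C Z Z' hsub h
    have key : ∀ S : Finset V, I A C (Z ∪ S) := by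
      intro S
      induction S using Finset.induction_on with
      | empty => simpa using h
      | @insert a S ha ih =>
        rw [Finset.union_insert]
        exact strongUnion _ _ _ _ ih
    have := key Z'
    rwa [Finset.union_eq_right.mpr hsub] at this
  intro X Y hY
  by_contra hX
  have hXY : X ≠ Y := fun h => hXB X (h ▸ hY)
  -- shrinking lemma: from independence given a superset of B X \ {Y} (avoiding X, Y),
  -- get independence given B X \ {Y}
  have shrink : ∀ n (Z : Finset V), Z.card ≤ n → B X \ {Y} ⊆ Z → X ∉ Z → Y ∉ Z →
      I X Y Z → I X Y (B X \ {Y}) := by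
    intro n
    induction n with
    | zero =>
      intro Z hcard hsub hXZ hYZ h
      have hZ : Z = ∅ := Finset.card_eq_zero.mp (Nat.le_zero.mp hcard)
      have : B X \ {Y} = ∅ := Finset.subset_empty.mp (hZ ▸ hsub)
      rw [this]; rw [hZ] at h; exact h
    | succ n ih =>
      intro Z hcard hsub hXZ hYZ h
      by_cases heq : Z ⊆ B X \ {Y}
      · have : Z = B X \ {Y} := Finset.Subset.antisymm heq hsub
        exact this ▸ h
      · obtain ⟨W, hWZ, hWn⟩ := Finset.not_subset.mp heq
        have hWY : W ≠ Y := fun hh => hYZ (hh ▸ hWZ)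
        have hWX : W ≠ X := fun hh => hXZ (hh ▸ hWZ)
        have hWB : W ∉ B X := fun hh =>
          hWn (Finset.mem_sdiff.mpr ⟨hh, by simp [hWY]⟩)
        have h1 : I X W (B X \ {W}) := hblanket X W hWX hWB
        have hsub2 : B X \ {W} ⊆ insert Y (Z.erase W) := by
          intro b hb
          rw [Finset.mem_sdiff, Finset.mem_singleton] at hb
          by_cases hbY : b = Y
          · exact hbY ▸ Finset.mem_insert_self _ _
          · have hbZ : b ∈ Z := hsub (Finset.mem_sdiff.mpr ⟨hb.1, by simp [hbY]⟩)
            exact Finset.mem_insert_of_mem (Finset.mem_erase.mpr ⟨hb.2, hbZ⟩)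
        have h2 : I X W (insert Y (Z.erase W)) := su _ _ _ _ hsub2 h1
        have h3 : I X Y (insert W (Z.erase W)) := by
          rwa [Finset.insert_erase hWZ]
        have h4 := (decomposition _ _ _ _ (intersection X Y W (Z.erase W) h3 h2)).1
        have hcard' : (Z.erase W).card ≤ n := by
          have := Finset.card_erase_of_mem hWZ
          omega
        have hsub' : B X \ {Y} ⊆ Z.erase W := by
          intro b hb
          refine Finset.mem_erase.mpr ⟨fun hh => hWn (hh ▸ hb), hsub hb⟩
        exact ih (Z.erase W) hcard' hsub' (fun hh => hXZ (Finset.mem_of_mem_erase hh))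
          (fun hh => hYZ (Finset.mem_of_mem_erase hh)) h4
  -- Start: X ∉ B Y gives I Y X (B Y \ {X}), hence I X Y (B Y \ {X})
  have h0 : I X Y (B Y \ {X}) := (symm _ _ _).mpr (hblanket Y X hXY hX)
  -- grow to the union
  set Z0 : Finset V := (B Y \ {X}) ∪ (B X \ {Y}) with hZ0
  have hg : I X Y Z0 := su _ _ _ _ Finset.subset_union_left h0
  have hXZ0 : X ∉ Z0 := by
    intro hh
    rcases Finset.mem_union.mp hh with h | h
    · exact (Finset.mem_sdiff.mp h).2 (by simp)
    · exact hXB X (Finset.mem_sdiff.mp h).1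
  have hYZ0 : Y ∉ Z0 := by
    intro hh
    rcases Finset.mem_union.mp hh with h | h
    · exact hXB Y (Finset.mem_sdiff.mp h).1
    · exact (Finset.mem_sdiff.mp h).2 (by simp)
  have hcore : I X Y (B X \ {Y}) :=
    shrink Z0.card Z0 le_rfl Finset.subset_union_right hXZ0 hYZ0 hg
  -- B X \ {Y} is a proper subset of B X
  have hss : B X \ {Y} ⊂ B X := by
    refine Finset.ssubset_iff_of_subset (Finset.sdiff_subset) |>.mpr ?_
    exact ⟨Y, hY, by simp⟩
  apply hmin X (B X \ {Y}) hss
  intro W hWX hW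
  by_cases hWY : W = Y
  · subst hWY
    have : (B X \ {W}) \ {W} = B X \ {W} := by
      ext b; simp
    rw [this]
    exact hcore
  · have hWB : W ∉ B X := fun hh => hW (Finset.mem_sdiff.mpr ⟨hh, by simp [hWY]⟩)
    have hZ' : (B X \ {Y}) \ {W} = B X \ {Y} := by
      ext b
      simp only [Finset.mem_sdiff, Finset.mem_singleton]
      constructor
      · tauto
      · intro hb
        exact ⟨hb, fun hh => hWB (hh ▸ hb.1)⟩
    rw [hZ']
    have h3 : I X Y (insert W (B X \ {Y})) :=
      su _ _ _ _ (Finset.subset_insert _ _) hcore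
    have hBX : insert Y (B X \ {Y}) = B X := by
      ext b
      simp only [Finset.mem_insert, Finset.mem_sdiff, Finset.mem_singleton]
      constructor
      · rintro (rfl | hb)
        · exact hY
        · exact hb.1
      · intro hb
        by_cases hbY : b = Y
        · exact Or.inl hbY
        · exact Or.inr ⟨hb, hbY⟩
    have h2 : I X W (insert Y (B X \ {Y})) := by
      rw [hBX]
      have := hblanket X W hWX hWB
      exact su _ _ _ _ (Finset.sdiff_subset) this
    exact (decomposition _ _ _ _ (intersection X Y W (B X \ {Y}) h3 h2)).2
end
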